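/- (Form-factor lower bound.) For every integer m ≥ 2 and every real g > 1, ∏_{p=0}^{m−1} ∏_{q=0}^{m−1} (ε_p + ε_{q+1/2})² ≥ ( ∏_{p=0}^{m−1} ∏_{p'=0}^{m−1} (ε_p + ε_{p'}) ) · ( ∏_{q=0}^{m−1} ∏_{q'=0}^{m−1} (ε_{q+1/2} + ε_{q'+1/2}) ). Equivalently, the form factor ξ with |ξ| = (1 − g^{−2})^{1/8} · [∏_{p}∏_{q}(ε_p + ε_{q+1/2})]^{1/4} / ( [∏_{p,p'}(ε_p + ε_{p'})]^{1/8} · [∏_{q,q'}(ε_{q+1/2} + ε_{q'+1/2})]^{1/8} ) satisfies |ξ| ≥ (1 − g^{−2})^{1/8}. -/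

import Mathlib

open scoped Real

/-- `ε_x = |g - e^{2πi x/m}|` for the transverse-field Ising chain of length `m`. -/
noncomputable def eps (m : ℕ) (g x : ℝ) : ℝ :=
  ‖(g : ℂ) - Complex.exp (2 * Real.pi * Complex.I * (x : ℂ) / (m : ℂ))‖

/-- The ground state energy splitting
`δ(g, m) = (1/2) (Σ_{j<m} ε_{j+1/2} - Σ_{j<m} ε_j)` of the periodic one-dimensional
transverse-field Ising chain on `m` qubits. -/
noncomputable def tfimDelta (m : ℕ) (g : ℝ) : ℝ :=
  (1 / 2) * ((∑ j ∈ Finset.range m, eps m g ((j : ℝ) + 1 / 2))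
    - ∑ j ∈ Finset.range m, eps m g (j : ℝ))

section Aux
open Finset Filter intervalIntegral MeasureTheory

set_option maxHeartbeats 800000 in
/-- Positive semidefiniteness of the Cauchy-type kernel `1/(x+y)` on positive reals. -/
lemma aux_cauchy_psd {ι : Type*} [Fintype ι] (c y : ι → ℝ) (hy : ∀ i, 0 < y i) :
    0 ≤ ∑ i : ι, ∑ j : ι, c i * c j * (y i + y j)⁻¹ := by
  have hkey : ∀ i j : ι, (y i + y j)⁻¹ = ∫ u in (0:ℝ)..1, u ^ (y i + y j - 1) := by
    intro i j
    have h1 : (-1:ℝ) < y i + y j - 1 := by linarith [hy i, hy j]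
    rw [integral_rpow (Or.inl h1)]
    rw [Real.one_rpow, Real.zero_rpow (by linarith), sub_add_cancel]
    simp
  have hint : ∀ i j : ι, IntervalIntegrable
      (fun u : ℝ => c i * c j * u ^ (y i + y j - 1)) volume 0 1 := by
    intro i j
    exact (intervalIntegrable_rpow' (by linarith [hy i, hy j])).const_mul _
  calc (0:ℝ) ≤ ∫ u in (0:ℝ)..1, ∑ i : ι, ∑ j : ι, c i * c j * u ^ (y i + y j - 1) := by
        rw [intervalIntegral.integral_of_le zero_le_one]
        apply MeasureTheory.setIntegral_nonneg measurableSet_Ioc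
        intro u hu
        have hu0 : 0 < u := hu.1
        have h2 : ∀ i j : ι, c i * c j * u ^ (y i + y j - 1)
            = (c i * u ^ (y i - 1/2)) * (c j * u ^ (y j - 1/2)) := by
          intro i j
          have h3 : y i + y j - 1 = (y i - 1/2) + (y j - 1/2) := by ring
          rw [h3, Real.rpow_add hu0]; ring
        simp_rw [h2]
        have h4 := sq_nonneg (∑ i : ι, c i * u ^ (y i - 1/2))
        rw [sq, Finset.sum_mul_sum] at h4
        exact h4
    _ = ∑ i : ι, ∑ j : ι, c i * c j * (y i + y j)⁻¹ := by
        have he : (fun u : ℝ => ∑ i : ι, ∑ j : ι, c i * c j * u ^ (y i + y j - 1))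
            = fun u => ∑ p : ι × ι, c p.1 * c p.2 * u ^ (y p.1 + y p.2 - 1) := by
          funext u; rw [Fintype.sum_prod_type]
        have hs : ∫ u in (0:ℝ)..1, ∑ p : ι × ι, c p.1 * c p.2 * u ^ (y p.1 + y p.2 - 1)
            = ∑ p : ι × ι, ∫ u in (0:ℝ)..1, c p.1 * c p.2 * u ^ (y p.1 + y p.2 - 1) :=
          intervalIntegral.integral_finset_sum (fun p _ => hint p.1 p.2)
        rw [he, hs]
        simp_rw [intervalIntegral.integral_const_mul, ← hkey]
        rw [Fintype.sum_prod_type]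

/-- Conditional negative definiteness of `log (x + y)` on positive reals. -/
lemma aux_log_cnd {ι : Type*} [Fintype ι] (c x : ι → ℝ) (hx : ∀ i, 0 < x i)
    (hc : ∑ i : ι, c i = 0) :
    ∑ i : ι, ∑ j : ι, c i * c j * Real.log (x i + x j) ≤ 0 := by
  set G : ℝ → ℝ := fun t => ∑ i : ι, ∑ j : ι, c i * c j * Real.log (x i + x j + t) with hG
  have hGd : ∀ t : ℝ, 0 ≤ t →
      HasDerivAt G (∑ i : ι, ∑ j : ι, c i * c j * (x i + x j + t)⁻¹) t := by
    intro t ht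
    apply HasDerivAt.fun_sum
    intro i _
    apply HasDerivAt.fun_sum
    intro j _
    have hpos : 0 < x i + x j + t := by linarith [hx i, hx j]
    have h1 : HasDerivAt (fun s : ℝ => x i + x j + s) 1 t :=
      (hasDerivAt_id t).const_add (x i + x j)
    have h2 := (h1.log (ne_of_gt hpos)).const_mul (c i * c j)
    simpa [one_div] using h2
  have hderiv_nonneg : ∀ t : ℝ, 0 ≤ t →
      0 ≤ ∑ i : ι, ∑ j : ι, c i * c j * (x i + x j + t)⁻¹ := by
    intro t ht
    have := aux_cauchy_psd c (fun i => x i + t / 2) (fun i => by linarith [hx i])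
    convert this using 4 with i j
    ring_nf
  have hmono : MonotoneOn G (Set.Ici (0:ℝ)) := by
    apply monotoneOn_of_deriv_nonneg (convex_Ici 0)
    · exact fun t ht => (hGd t ht).continuousAt.continuousWithinAt
    · intro t ht
      rw [interior_Ici] at ht
      exact (hGd t (le_of_lt ht)).differentiableAt.differentiableWithinAt
    · intro t ht
      rw [interior_Ici] at ht
      rw [(hGd t (le_of_lt ht)).deriv]
      exact hderiv_nonneg t (le_of_lt ht)
  have hlim : Tendsto G atTop (nhds 0) := by
    have hterm : ∀ i j : ι, Tendsto
        (fun t : ℝ => c i * c j * (Real.log (x i + x j + t) - Real.log t))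
        atTop (nhds 0) := by
      intro i j
      have hxx : 0 < x i + x j := by linarith [hx i, hx j]
      have h0 : Tendsto (fun t : ℝ => (x i + x j) / t + 1) atTop (nhds 1) := by
        have : Tendsto (fun t : ℝ => (x i + x j) / t) atTop (nhds 0) :=
          Filter.Tendsto.div_atTop tendsto_const_nhds tendsto_id
        simpa using this.add (tendsto_const_nhds (x := (1:ℝ)))
      have h1 : Tendsto (fun t : ℝ => Real.log ((x i + x j) / t + 1)) atTop (nhds 0) := by
        have := (Real.continuousAt_log one_ne_zero).tendsto.comp h0
        simpa [Function.comp_def] using this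
      have h2 : (fun t : ℝ => Real.log (x i + x j + t) - Real.log t)
          =ᶠ[atTop] fun t => Real.log ((x i + x j) / t + 1) := by
        filter_upwards [eventually_gt_atTop (0:ℝ)] with t ht
        rw [← Real.log_div (by positivity) (ne_of_gt ht)]
        congr 1
        field_simp
      have := (h1.congr' h2.symm).const_mul (c i * c j)
      simpa using this
    have hsum : Tendsto
        (fun t : ℝ => ∑ i : ι, ∑ j : ι, c i * c j * (Real.log (x i + x j + t) - Real.log t))
        atTop (nhds 0) := by
      have := tendsto_finset_sum Finset.univ (fun i (_ : i ∈ Finset.univ) =>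
        tendsto_finset_sum Finset.univ (fun j (_ : j ∈ Finset.univ) => hterm i j))
      simpa using this
    apply hsum.congr'
    filter_upwards [eventually_gt_atTop (0:ℝ)] with t ht
    have : ∑ i : ι, ∑ j : ι, c i * c j * Real.log t = 0 := by
      simp_rw [← Finset.sum_mul, ← Finset.mul_sum]
      rw [← Finset.sum_mul, hc]; simp
    rw [hG]
    simp only [mul_sub]
    rw [Finset.sum_congr rfl (fun i _ => Finset.sum_sub_distrib _ _)]
    rw [Finset.sum_sub_distrib, this, sub_zero]
  have h0le : G 0 ≤ 0 := by
    apply ge_of_tendsto hlim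
    filter_upwards [eventually_ge_atTop (0:ℝ)] with t ht
    exact hmono Set.self_mem_Ici ht ht
  simpa [hG] using h0le

/-- Two-family form of the conditional negative definiteness of `log`. -/
lemma aux_two_family (m : ℕ) (a b : ℕ → ℝ) (ha : ∀ i, 0 < a i) (hb : ∀ i, 0 < b i) :
    (∑ p ∈ range m, ∑ p' ∈ range m, Real.log (a p + a p'))
      + (∑ q ∈ range m, ∑ q' ∈ range m, Real.log (b q + b q'))
    ≤ 2 * ∑ p ∈ range m, ∑ q ∈ range m, Real.log (a p + b q) := by
  have key := aux_log_cnd (ι := Fin m ⊕ Fin m)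
    (Sum.elim (fun _ => (1:ℝ)) fun _ => -1)
    (Sum.elim (fun i : Fin m => a i) fun i : Fin m => b i)
    (by rintro (i | i) <;> simp [ha, hb])
    (by simp [Fintype.sum_sum_type])
  simp only [Fintype.sum_sum_type, Sum.elim_inl, Sum.elim_inr, one_mul, neg_one_mul,
    mul_neg, neg_neg, Finset.sum_add_distrib, Finset.sum_neg_distrib] at key
  have hswap : ∑ i : Fin m, ∑ j : Fin m, Real.log (b i + a j)
      = ∑ i : Fin m, ∑ j : Fin m, Real.log (a i + b j) := by
    rw [Finset.sum_comm]
    simp_rw [add_comm]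
  rw [hswap] at key
  have e1 : ∑ p ∈ range m, ∑ p' ∈ range m, Real.log (a p + a p')
      = ∑ i : Fin m, ∑ j : Fin m, Real.log (a i + a j) := by
    rw [← Fin.sum_univ_eq_sum_range]
    exact Finset.sum_congr rfl fun i _ => by rw [← Fin.sum_univ_eq_sum_range]
  have e2 : ∑ q ∈ range m, ∑ q' ∈ range m, Real.log (b q + b q')
      = ∑ i : Fin m, ∑ j : Fin m, Real.log (b i + b j) := by
    rw [← Fin.sum_univ_eq_sum_range]
    exact Finset.sum_congr rfl fun i _ => by rw [← Fin.sum_univ_eq_sum_range]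
  have e3 : ∑ p ∈ range m, ∑ q ∈ range m, Real.log (a p + b q)
      = ∑ i : Fin m, ∑ j : Fin m, Real.log (a i + b j) := by
    rw [← Fin.sum_univ_eq_sum_range]
    exact Finset.sum_congr rfl fun i _ => by rw [← Fin.sum_univ_eq_sum_range]
  rw [e1, e2, e3]
  linarith [key]

end Aux

open Finset in
lemma aux_eps_pos (m : ℕ) (g x : ℝ) (hg : 1 < g) : 0 < eps m g x := by
  unfold eps
  have h1 : (2 * (Real.pi : ℂ) * Complex.I * (x : ℂ) / (m : ℂ))
      = ((2 * Real.pi * x / m : ℝ) : ℂ) * Complex.I := by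
    push_cast
    ring
  have h2 : ‖Complex.exp (2 * (Real.pi : ℂ) * Complex.I * (x : ℂ) / (m : ℂ))‖ = 1 := by
    rw [h1]
    exact Complex.norm_exp_ofReal_mul_I _
  have h3 : ‖(g : ℂ)‖ - ‖Complex.exp (2 * (Real.pi : ℂ) * Complex.I * (x : ℂ) / (m : ℂ))‖
      ≤ ‖(g : ℂ) - Complex.exp (2 * (Real.pi : ℂ) * Complex.I * (x : ℂ) / (m : ℂ))‖ :=
    norm_sub_norm_le _ _
  rw [h2, Complex.norm_real, Real.norm_eq_abs, abs_of_pos (by linarith)] at h3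
  linarith

open Finset in
lemma aux_prod_ineq (m : ℕ) (a b : ℕ → ℝ) (ha : ∀ i, 0 < a i) (hb : ∀ i, 0 < b i) :
    (∏ p ∈ range m, ∏ p' ∈ range m, (a p + a p'))
      * (∏ q ∈ range m, ∏ q' ∈ range m, (b q + b q'))
    ≤ (∏ p ∈ range m, ∏ q ∈ range m, (a p + b q)) ^ 2 := by
  have H := aux_two_family m a b ha hb
  have hP : 0 < ∏ p ∈ range m, ∏ q ∈ range m, (a p + b q) :=
    Finset.prod_pos fun p _ => Finset.prod_pos fun q _ => add_pos (ha _) (hb _)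
  have hQ : 0 < ∏ p ∈ range m, ∏ p' ∈ range m, (a p + a p') :=
    Finset.prod_pos fun p _ => Finset.prod_pos fun q _ => add_pos (ha _) (ha _)
  have hR : 0 < ∏ q ∈ range m, ∏ q' ∈ range m, (b q + b q') :=
    Finset.prod_pos fun p _ => Finset.prod_pos fun q _ => add_pos (hb _) (hb _)
  have lp : ∀ (f : ℕ → ℕ → ℝ), (∀ i j, 0 < f i j) →
      Real.log (∏ p ∈ range m, ∏ q ∈ range m, f p q)
        = ∑ p ∈ range m, ∑ q ∈ range m, Real.log (f p q) := by
    intro f hf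
    rw [Real.log_prod (fun p _ => (Finset.prod_pos fun q _ => hf p q).ne')]
    exact Finset.sum_congr rfl fun p _ =>
      Real.log_prod fun q _ => (hf p q).ne'
  rw [← Real.log_le_log_iff (mul_pos hQ hR) (pow_pos hP 2)]
  rw [Real.log_mul hQ.ne' hR.ne', Real.log_pow]
  rw [lp _ (fun i j => add_pos (ha _) (ha _)), lp _ (fun i j => add_pos (hb _) (hb _)),
    lp _ (fun i j => add_pos (ha _) (hb _))]
  push_cast
  linarith

/-- **Form-factor lower bound** (Eq. (xi_bound)): for `m ≥ 2` and `g > 1`,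
`∏_{p,q} (ε_p + ε_{q+1/2})² ≥ (∏_{p,p'} (ε_p + ε_{p'})) (∏_{q,q'} (ε_{q+1/2} + ε_{q'+1/2}))`;
equivalently, the form factor `|ξ|` of Eq. (xi) satisfies `|ξ| ≥ (1 - g^{-2})^{1/8}`. -/
theorem form_factor_lower_bound (m : ℕ) (hm : 2 ≤ m) (g : ℝ) (hg : 1 < g) :
    (∏ p ∈ Finset.range m, ∏ q ∈ Finset.range m,
        (eps m g (p : ℝ) + eps m g ((q : ℝ) + 1 / 2)) ^ 2 ≥
      (∏ p ∈ Finset.range m, ∏ p' ∈ Finset.range m,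
        (eps m g (p : ℝ) + eps m g (p' : ℝ))) *
      ∏ q ∈ Finset.range m, ∏ q' ∈ Finset.range m,
        (eps m g ((q : ℝ) + 1 / 2) + eps m g ((q' : ℝ) + 1 / 2))) ∧
    (1 - (g ^ 2)⁻¹) ^ ((1 : ℝ) / 8) *
        (∏ p ∈ Finset.range m, ∏ q ∈ Finset.range m,
          (eps m g (p : ℝ) + eps m g ((q : ℝ) + 1 / 2))) ^ ((1 : ℝ) / 4) /
        ((∏ p ∈ Finset.range m, ∏ p' ∈ Finset.range m,
            (eps m g (p : ℝ) + eps m g (p' : ℝ))) ^ ((1 : ℝ) / 8) *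
          (∏ q ∈ Finset.range m, ∏ q' ∈ Finset.range m,
            (eps m g ((q : ℝ) + 1 / 2) + eps m g ((q' : ℝ) + 1 / 2))) ^ ((1 : ℝ) / 8)) ≥
      (1 - (g ^ 2)⁻¹) ^ ((1 : ℝ) / 8) := by
  set a : ℕ → ℝ := fun p => eps m g (p : ℝ) with ha_def
  set b : ℕ → ℝ := fun q => eps m g ((q : ℝ) + 1 / 2) with hb_def
  have ha : ∀ i, 0 < a i := fun i => aux_eps_pos m g _ hg
  have hb : ∀ i, 0 < b i := fun i => aux_eps_pos m g _ hg
  have hQR := aux_prod_ineq m a b ha hb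
  set P := ∏ p ∈ Finset.range m, ∏ q ∈ Finset.range m, (a p + b q) with hP_def
  set Q := ∏ p ∈ Finset.range m, ∏ p' ∈ Finset.range m, (a p + a p') with hQ_def
  set R := ∏ q ∈ Finset.range m, ∏ q' ∈ Finset.range m, (b q + b q') with hR_def
  have hP : 0 < P :=
    Finset.prod_pos fun p _ => Finset.prod_pos fun q _ => add_pos (ha _) (hb _)
  have hQ : 0 < Q :=
    Finset.prod_pos fun p _ => Finset.prod_pos fun q _ => add_pos (ha _) (ha _)
  have hR : 0 < R :=
    Finset.prod_pos fun p _ => Finset.prod_pos fun q _ => add_pos (hb _) (hb _)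
  constructor
  · have : ∏ p ∈ Finset.range m, ∏ q ∈ Finset.range m, (a p + b q) ^ 2 = P ^ 2 := by
      rw [hP_def]
      rw [← Finset.prod_pow]
      exact Finset.prod_congr rfl fun p _ => Finset.prod_pow _ 2 _
    rw [this]
    exact hQR
  · have hA : (0:ℝ) < 1 - (g ^ 2)⁻¹ := by
      have h1 : (1:ℝ) < g ^ 2 := by nlinarith
      have : (g ^ 2)⁻¹ < 1 := by
        exact inv_lt_one_of_one_lt₀ h1
      linarith
    have hd : (0:ℝ) < Q ^ ((1:ℝ)/8) * R ^ ((1:ℝ)/8) :=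
      mul_pos (Real.rpow_pos_of_pos hQ _) (Real.rpow_pos_of_pos hR _)
    rw [ge_iff_le, le_div_iff₀ hd]
    have hdle : Q ^ ((1:ℝ)/8) * R ^ ((1:ℝ)/8) ≤ P ^ ((1:ℝ)/4) := by
      have h1 : Q ^ ((1:ℝ)/8) * R ^ ((1:ℝ)/8) = (Q * R) ^ ((1:ℝ)/8) :=
        (Real.mul_rpow hQ.le hR.le).symm
      have h2 : (Q * R) ^ ((1:ℝ)/8) ≤ (P ^ 2) ^ ((1:ℝ)/8) :=
        Real.rpow_le_rpow (mul_pos hQ hR).le hQR (by norm_num)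
      have h3 : (P ^ 2) ^ ((1:ℝ)/8) = P ^ ((1:ℝ)/4) := by
        rw [← Real.rpow_natCast P 2, ← Real.rpow_mul hP.le]
        norm_num
      rw [h1]
      calc (Q * R) ^ ((1:ℝ)/8) ≤ (P ^ 2) ^ ((1:ℝ)/8) := h2
        _ = P ^ ((1:ℝ)/4) := h3
    calc (1 - (g ^ 2)⁻¹) ^ ((1:ℝ)/8) * (Q ^ ((1:ℝ)/8) * R ^ ((1:ℝ)/8))
        ≤ (1 - (g ^ 2)⁻¹) ^ ((1:ℝ)/8) * P ^ ((1:ℝ)/4) :=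
          mul_le_mul_of_nonneg_left hdle (Real.rpow_nonneg hA.le _)
      _ = (1 - (g ^ 2)⁻¹) ^ ((1:ℝ)/8) * P ^ ((1:ℝ)/4) := rfl
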